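/- Property (2) of Theorem 4.1 (main bound): the total variation distance between the product-of-marginals PMF and the joint PMF is at most n·ε, i.e. Δ_TVD(p,q) = (1/2)·∑_{x : Fin n → V} |p(x) − q(x)| ≤ n·ε. -/

import Mathlib

open MeasureTheory Finset

lemma weierstrass {ι : Type*} [DecidableEq ι] (s : Finset ι) (f : ι → ℝ) (h0 : ∀ i ∈ s, 0 ≤ f i)
    (h1 : ∀ i ∈ s, f i ≤ 1) : 1 - ∑ i ∈ s, f i ≤ ∏ i ∈ s, (1 - f i) := by
  induction s using Finset.induction with
  | empty => simp
  | insert _ _ hx ih =>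
    rename_i a s
    rw [Finset.sum_insert hx, Finset.prod_insert hx]
    have h0a := h0 a (Finset.mem_insert_self a s)
    have h1a := h1 a (Finset.mem_insert_self a s)
    have ih' := ih (fun i hi => h0 i (Finset.mem_insert_of_mem hi))
      (fun i hi => h1 i (Finset.mem_insert_of_mem hi))
    have hs : ∑ i ∈ s, f i ≥ 0 := Finset.sum_nonneg (fun i hi => h0 i (Finset.mem_insert_of_mem hi))
    nlinarith [mul_le_mul_of_nonneg_left ih' (by linarith : (0:ℝ) ≤ 1 - f a)]

/-- Theorem 4.1, Property (2) (main bound): the total variation distance between the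
product-of-marginals PMF `p` and the joint PMF `q` is at most `n * ε`. -/
theorem tvd_le_n_mul_eps
    (n : ℕ) (hn : 0 < n)
    (V : Type*) [Fintype V] [Nonempty V] [DecidableEq V]
    [MeasurableSpace (Fin n → V)] [DiscreteMeasurableSpace (Fin n → V)]
    (μ : Measure (Fin n → V)) [IsProbabilityMeasure μ]
    (xstar : Fin n → V)
    (εi : Fin n → ℝ) (hεi : ∀ i, εi i = 1 - (μ {y | y i = xstar i}).toReal)
    (hεi_nonneg : ∀ i, 0 ≤ εi i) (hεi_lt_one : ∀ i, εi i < 1)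
    (ε : ℝ) (hε : ε = ⨆ i, εi i)
    (p q : (Fin n → V) → ℝ)
    (hp : ∀ x, p x = ∏ i, (μ {y | y i = x i}).toReal)
    (hq : ∀ x, q x = (μ {x}).toReal) :
    (1 / 2) * ∑ x : Fin n → V, |p x - q x| ≤ (n : ℝ) * ε := by
  -- each εi ≤ ε
  have hle : ∀ i, εi i ≤ ε := by
    intro i
    rw [hε]
    exact le_ciSup (Finset.bddAbove (Finset.univ.image εi) |>.mono (by
      intro x hx; obtain ⟨j, rfl⟩ := hx; exact Finset.mem_image_of_mem _ (Finset.mem_univ j))) i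
  -- nonnegativity of p, q
  have hp0 : ∀ x, 0 ≤ p x := fun x => (hp x) ▸ Finset.prod_nonneg (fun i _ => ENNReal.toReal_nonneg)
  have hq0 : ∀ x, 0 ≤ q x := fun x => (hq x) ▸ ENNReal.toReal_nonneg
  -- sums equal 1
  have hμfin : ∀ s : Set (Fin n → V), μ s ≠ ⊤ := fun s => (measure_lt_top μ s).ne
  have hqsum : ∑ x : Fin n → V, q x = 1 := by
    have : ∑ x : Fin n → V, μ {x} = μ Set.univ := by
      rw [← measure_biUnion_finset]
      · simp [Set.iUnion_of_singleton]
      · intro a _ b _ hab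
        simp [Function.onFun, Set.disjoint_singleton, hab]
      · intro x _; exact MeasurableSet.of_discrete
    simp only [hq]
    rw [← ENNReal.toReal_sum (fun x _ => hμfin _), this, measure_univ, ENNReal.toReal_one]
  have hpsum : ∑ x : Fin n → V, p x = 1 := by
    simp only [hp]
    rw [← Fintype.piFinset_univ,
      show (∑ x ∈ Fintype.piFinset (fun _ : Fin n => (Finset.univ : Finset V)),
          ∏ i, (μ {y | y i = x i}).toReal)
        = ∏ i : Fin n, ∑ v : V, (μ {y | y i = v}).toReal from
        (Finset.prod_univ_sum _ (fun i v => (μ {y | y i = v}).toReal)).symm]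
    have : ∀ i : Fin n, (∑ v : V, (μ {y | y i = v}).toReal) = 1 := by
      intro i
      rw [← ENNReal.toReal_sum (fun v _ => hμfin _)]
      have : ∑ v : V, μ {y | y i = v} = μ Set.univ := by
        rw [← measure_biUnion_finset]
        · congr 1; ext y; simp
        · intro a _ b _ hab
          simp only [Function.onFun, Set.disjoint_left]
          rintro y rfl; exact hab
        · intro v _; exact MeasurableSet.of_discrete
      rw [this, measure_univ, ENNReal.toReal_one]
    simp [this]
  -- rewrite TVD
  have habs : ∀ x, |p x - q x| = p x + q x - 2 * min (p x) (q x) := by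
    intro x
    rcases le_total (p x) (q x) with h | h
    · rw [abs_of_nonpos (by linarith), min_eq_left h]; ring
    · rw [abs_of_nonneg (by linarith), min_eq_right h]; ring
  have hTVD : (1 / 2) * ∑ x : Fin n → V, |p x - q x|
      = 1 - ∑ x : Fin n → V, min (p x) (q x) := by
    simp only [habs]
    rw [Finset.sum_sub_distrib, Finset.sum_add_distrib, hpsum, hqsum, ← Finset.mul_sum]
    ring
  rw [hTVD]
  -- lower bounds at xstar
  have hεsum : ∑ i : Fin n, εi i ≤ n * ε := by
    calc ∑ i : Fin n, εi i ≤ ∑ _i : Fin n, ε := Finset.sum_le_sum (fun i _ => hle i)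
    _ = n * ε := by simp [mul_comm]
  have hpstar : 1 - n * ε ≤ p xstar := by
    have : ∀ i : Fin n, (μ {y | y i = xstar i}).toReal = 1 - εi i := by
      intro i; rw [hεi i]; ring
    rw [hp]
    simp only [this]
    calc (1 : ℝ) - n * ε ≤ 1 - ∑ i : Fin n, εi i := by linarith
    _ ≤ ∏ i : Fin n, (1 - εi i) :=
        weierstrass _ _ (fun i _ => hεi_nonneg i) (fun i _ => (hεi_lt_one i).le)
  have hqstar : 1 - n * ε ≤ q xstar := by
    have hcompl : μ {xstar}ᶜ ≤ ∑ i : Fin n, μ {y | y i ≠ xstar i} := by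
      refine le_trans (measure_mono ?_) (measure_iUnion_fintype_le μ _)
      intro y hy
      simp only [Set.mem_compl_iff, Set.mem_singleton_iff] at hy
      by_contra h
      simp only [Set.mem_iUnion, not_exists, Set.mem_setOf_eq, not_not] at h
      exact hy (funext h)
    have hterm : ∀ i, (μ {y | y i ≠ xstar i}).toReal = εi i := by
      intro i
      have : {y : Fin n → V | y i ≠ xstar i} = {y | y i = xstar i}ᶜ := rfl
      rw [this, prob_compl_eq_one_sub MeasurableSet.of_discrete,
        ENNReal.toReal_sub_of_le prob_le_one ENNReal.one_ne_top, ENNReal.toReal_one, hεi i]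
    have h1 : (μ {xstar}ᶜ).toReal ≤ ∑ i : Fin n, εi i := by
      calc (μ {xstar}ᶜ).toReal ≤ (∑ i : Fin n, μ {y | y i ≠ xstar i}).toReal :=
        ENNReal.toReal_mono (by
          refine ENNReal.sum_ne_top.mpr ?_
          intro i _; exact hμfin _) hcompl
      _ = ∑ i : Fin n, εi i := by
          rw [ENNReal.toReal_sum (fun i _ => hμfin _)]; exact Finset.sum_congr rfl fun i _ => hterm i
    have h2 : (μ {xstar}).toReal = 1 - (μ {xstar}ᶜ).toReal := by
      rw [prob_compl_eq_one_sub MeasurableSet.of_discrete,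
        ENNReal.toReal_sub_of_le prob_le_one ENNReal.one_ne_top, ENNReal.toReal_one]
      ring
    rw [hq, h2]
    linarith
  -- conclude
  have hmin : min (p xstar) (q xstar) ≤ ∑ x : Fin n → V, min (p x) (q x) :=
    Finset.single_le_sum (fun x _ => le_min (hp0 x) (hq0 x)) (Finset.mem_univ xstar)
  have : 1 - n * ε ≤ min (p xstar) (q xstar) := le_min hpstar hqstar
  linarith
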